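/- Non-convexity of the degree-3 stability domain: the set S = {(θ₁,θ₂,θ₃) ∈ R³ : 1+θ₁+θ₂+θ₃ > 0, 3+θ₁−θ₂−3θ₃ > 0, 1−θ₁+θ₂−θ₃ > 0, 1−θ₂−θ₃²+θ₁θ₃ > 0} is not convex. -/
import Mathlib


/-- The degree-3 stability domain is not convex. -/
theorem stmt13 :
    ¬ Convex ℝ {p : ℝ × ℝ × ℝ |
      0 < 1 + p.1 + p.2.1 + p.2.2 ∧
      0 < 3 + p.1 - p.2.1 - 3 * p.2.2 ∧
      0 < 1 - p.1 + p.2.1 - p.2.2 ∧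
      0 < 1 - p.2.1 - p.2.2 ^ 2 + p.1 * p.2.2} := by
  intro h
  have ha : ((27/10 : ℝ), (243/100 : ℝ), (729/1000 : ℝ)) ∈ {p : ℝ × ℝ × ℝ |
      0 < 1 + p.1 + p.2.1 + p.2.2 ∧
      0 < 3 + p.1 - p.2.1 - 3 * p.2.2 ∧
      0 < 1 - p.1 + p.2.1 - p.2.2 ∧
      0 < 1 - p.2.1 - p.2.2 ^ 2 + p.1 * p.2.2} := by
    constructor <;> [norm_num; constructor] <;> [skip; constructor] <;> norm_num
  have hb : ((-27/10 : ℝ), (243/100 : ℝ), (-729/1000 : ℝ)) ∈ {p : ℝ × ℝ × ℝ |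
      0 < 1 + p.1 + p.2.1 + p.2.2 ∧
      0 < 3 + p.1 - p.2.1 - 3 * p.2.2 ∧
      0 < 1 - p.1 + p.2.1 - p.2.2 ∧
      0 < 1 - p.2.1 - p.2.2 ^ 2 + p.1 * p.2.2} := by
    refine ⟨by norm_num, by norm_num, by norm_num, by norm_num⟩
  have hmid := h ha hb (by norm_num : (0:ℝ) ≤ 1/2) (by norm_num : (0:ℝ) ≤ 1/2)
    (by norm_num : (1/2 : ℝ) + 1/2 = 1)
  obtain ⟨-, -, -, h4⟩ := hmid
  simp only [Prod.smul_mk, smul_eq_mul, Prod.mk_add_mk] at h4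
  norm_num at h4
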